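/- Let R, R' be reduced 𝔽_p-algebras, each equipped as a log algebra over a log point (k, N) with monoid maps M → R and M' → R'. Equip W(R) and W(R') with the Teichmüller log structures [α] : M → W(R), [α'] : M' → W(R'). Then restriction induces a bijection between Frobenius-compatible morphisms of log W(k)-algebras (W(R), M) → (W(R'), M') and morphisms of log k-algebras (R, M) → (R', M'). -/
import Mathlib

set_option maxHeartbeats 1000000

attribute [-instance] WittVector.hasNatPow TruncatedWittVector.hasNatPow

open Function

namespace Statement6Aux

variable {p : ℕ} [hp : Fact p.Prime] {B : Type} [CommRing B]

local notation "𝕎" => WittVector p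

lemma iter_versch_coeff_lt (t : 𝕎 B) : ∀ {n j : ℕ}, j < n →
    (WittVector.verschiebung^[n] t).coeff j = 0 := by
  intro n
  induction n with
  | zero => intro j h; omega
  | succ n ih =>
    intro j hj
    rw [Function.iterate_succ_apply']
    cases j with
    | zero => exact WittVector.verschiebung_coeff_zero _
    | succ j =>
      rw [WittVector.verschiebung_coeff_succ]
      exact ih (by omega)

lemma exists_iter_versch {n : ℕ} (z : 𝕎 B) (hz : ∀ j < n, z.coeff j = 0) :
    WittVector.verschiebung^[n] (WittVector.mk p fun j => z.coeff (j + n)) = z := by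
  ext j
  rcases lt_or_ge j n with h | h
  · rw [iter_versch_coeff_lt _ h, hz j h]
  · obtain ⟨k, rfl⟩ : ∃ k, j = k + n := ⟨j - n, by omega⟩
    rw [WittVector.iterate_verschiebung_coeff]
    simp [WittVector.coeff_mk]

lemma teich_decomp (x : 𝕎 B) :
    x = WittVector.teichmuller p (x.coeff 0) +
      WittVector.verschiebung (WittVector.mk p fun j =>
        (x - WittVector.teichmuller p (x.coeff 0)).coeff (j + 1)) := by
  have h0 : (x - WittVector.teichmuller p (x.coeff 0)).coeff 0 = 0 := by
    have : WittVector.constantCoeff (x - WittVector.teichmuller p (x.coeff 0)) = 0 := by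
      rw [map_sub]
      simp [WittVector.constantCoeff_apply, WittVector.teichmuller_coeff_zero]
    simpa [WittVector.constantCoeff_apply] using this
  have key : WittVector.verschiebung (WittVector.mk p fun j =>
      (x - WittVector.teichmuller p (x.coeff 0)).coeff (j + 1)) =
      x - WittVector.teichmuller p (x.coeff 0) := by
    ext j
    cases j with
    | zero => rw [WittVector.verschiebung_coeff_zero]; exact h0.symm
    | succ j =>
      rw [WittVector.verschiebung_coeff_succ]
      simp [WittVector.coeff_mk]
  rw [key]; ring

lemma teich_pow (a : B) (n : ℕ) :
    WittVector.teichmuller p a ^ n = WittVector.teichmuller p (a ^ n) := by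
  induction n with
  | zero => simp
  | succ m ih => rw [pow_succ, pow_succ, ih, ← map_mul]

lemma coeff_iterate_versch_self (x : 𝕎 B) (n : ℕ) :
    (WittVector.verschiebung^[n] x).coeff n = x.coeff 0 := by
  have := WittVector.iterate_verschiebung_coeff x n 0
  rwa [zero_add] at this

lemma versch_sub (x y : 𝕎 B) :
    WittVector.verschiebung x - WittVector.verschiebung y =
      WittVector.verschiebung (x - y) := by
  have h := WittVector.verschiebung.map_add (x - y) y
  rw [sub_add_cancel] at h
  rw [h, add_sub_cancel_right]

lemma frob_teich [CharP B p] (a : B) :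
    WittVector.frobenius (WittVector.teichmuller p a) = WittVector.teichmuller p a ^ p := by
  rw [teich_pow]
  ext n
  rw [WittVector.coeff_frobenius_charP]
  cases n with
  | zero => rw [WittVector.teichmuller_coeff_zero, WittVector.teichmuller_coeff_zero]
  | succ n =>
    rw [WittVector.teichmuller_coeff_pos _ _ _ (Nat.succ_pos n),
      WittVector.teichmuller_coeff_pos _ _ _ (Nat.succ_pos n),
      zero_pow hp.out.ne_zero]

lemma frob_inj [CharP B p] [IsReduced B] :
    Function.Injective (WittVector.frobenius : 𝕎 B → 𝕎 B) := by
  intro x y h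
  ext n
  have hc : x.coeff n ^ p = y.coeff n ^ p := by
    rw [← WittVector.coeff_frobenius_charP, ← WittVector.coeff_frobenius_charP, h]
  have : (x.coeff n - y.coeff n) ^ p = 0 := by
    rw [sub_pow_char, hc, sub_self]
  have := IsReduced.eq_zero _ ⟨p, this⟩
  exact sub_eq_zero.mp this

lemma eq_teich [CharP B p] [IsReduced B] (u : 𝕎 B) (h : u ^ p = WittVector.frobenius u) :
    u = WittVector.teichmuller p (u.coeff 0) := by
  have key : ∀ i, i ≠ 0 → u.coeff i = 0 := by
    intro i
    induction i using Nat.strong_induction_on with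
    | _ i IH =>
      intro hi0
      have hipos : 0 < i := Nat.pos_of_ne_zero hi0
      set c := u.coeff 0 with hc
      set w := u - WittVector.teichmuller p c with hwdef
      -- truncation of `w` below `i` vanishes
      have htr : WittVector.truncate (p := p) i w = 0 := by
        rw [hwdef, map_sub, sub_eq_zero]
        apply TruncatedWittVector.ext
        intro j
        rw [WittVector.coeff_truncate, WittVector.coeff_truncate]
        rcases Nat.eq_zero_or_pos j.1 with h0 | hjpos
        · rw [h0, WittVector.teichmuller_coeff_zero]
        · rw [IH j.1 j.2 hjpos.ne', WittVector.teichmuller_coeff_pos _ _ _ hjpos]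
      have hw : ∀ j < i, w.coeff j = 0 :=
        (WittVector.mem_ker_truncate i w).mp (RingHom.mem_ker.mpr htr)
      have hw0 : w.coeff 0 = 0 := hw 0 hipos
      have hu : u = w + WittVector.teichmuller p c := by rw [hwdef]; ring
      -- all terms with `k ≠ 0` in the binomial expansion die in `truncate (i+1)`
      have h1 : ∀ k ∈ Finset.range (p + 1), k ≠ 0 →
          WittVector.truncate (p := p) (i + 1)
            (w ^ k * WittVector.teichmuller p c ^ (p - k) * (p.choose k : 𝕎 B)) = 0 := by
        intro k hk hk0
        have hk' : k ≤ p := Nat.lt_succ_iff.mp (Finset.mem_range.mp hk)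
        rcases eq_or_lt_of_le hk' with hkeq | hkp
        · -- k = p : the term is w ^ p
          rw [hkeq, Nat.sub_self, pow_zero, mul_one, Nat.choose_self, Nat.cast_one, mul_one]
          refine RingHom.mem_ker.mp ((WittVector.mem_ker_truncate (i + 1) _).mpr ?_)
          intro j hj
          rcases Nat.lt_succ_iff_lt_or_eq.mp hj with hj' | rfl
          · -- j < i : use that truncate i w = 0 and it's a ring hom
            have : WittVector.truncate (p := p) i (w ^ p) = 0 := by
              rw [map_pow, htr, zero_pow hp.out.ne_zero]
            exact (WittVector.mem_ker_truncate i _).mp (RingHom.mem_ker.mpr this) j hj'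
          · -- j = i : use the Verschiebung representation
            have hV := exists_iter_versch (n := j) w hw
            have hsplit : w ^ p = w * w ^ (p - 1) := by
              have h1 : w ^ (p - 1 + 1) = w * w ^ (p - 1) := pow_succ' w (p - 1)
              have h2 : p - 1 + 1 = p := by have := hp.out.two_le; omega
              rw [h2] at h1
              exact h1
            rw [hsplit]
            nth_rewrite 1 [← hV]
            rw [WittVector.iterate_verschiebung_mul_left, coeff_iterate_versch_self,
              WittVector.mul_coeff_zero, WittVector.iterate_frobenius_coeff]
            have hw0' : (w ^ (p - 1)).coeff 0 = 0 := by
              have : WittVector.constantCoeff (w ^ (p - 1)) =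
                  (WittVector.constantCoeff w) ^ (p - 1) := map_pow _ _ _
              rw [WittVector.constantCoeff_apply, WittVector.constantCoeff_apply] at this
              rw [this, hw0, zero_pow]
              have := hp.out.two_le
              omega
            rw [hw0', zero_pow (pow_ne_zero _ hp.out.ne_zero), mul_zero]
        · -- 0 < k < p : the binomial coefficient is divisible by p
          obtain ⟨m, hm⟩ := hp.out.dvd_choose_self hk0 hkp
          have hterm : w ^ k * WittVector.teichmuller p c ^ (p - k) * (p.choose k : 𝕎 B) =
              (w ^ k * WittVector.teichmuller p c ^ (p - k) * (m : 𝕎 B)) * (p : 𝕎 B) := by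
            rw [hm]; push_cast; ring
          rw [hterm]
          set v := w ^ k * WittVector.teichmuller p c ^ (p - k) * (m : 𝕎 B) with hv
          have hvtr : ∀ j < i, v.coeff j = 0 := by
            have : WittVector.truncate (p := p) i v = 0 := by
              rw [hv, map_mul, map_mul, map_pow, htr, zero_pow hk0, zero_mul, zero_mul]
            exact (WittVector.mem_ker_truncate i v).mp (RingHom.mem_ker.mpr this)
          refine RingHom.mem_ker.mp ((WittVector.mem_ker_truncate (i + 1) _).mpr ?_)
          intro j hj
          cases j with
          | zero => exact WittVector.mul_charP_coeff_zero v
          | succ j =>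
            rw [WittVector.mul_charP_coeff_succ v j, hvtr j (by omega),
              zero_pow hp.out.ne_zero]
      -- hence `u ^ p` agrees with `[c] ^ p` up to level `i`
      have hT : WittVector.truncate (p := p) (i + 1) (u ^ p) =
          WittVector.truncate (p := p) (i + 1) (WittVector.teichmuller p c ^ p) := by
        have hsum := add_pow w (WittVector.teichmuller p c) p
        rw [← hu] at hsum
        rw [hsum, map_sum, Finset.sum_eq_single_of_mem 0
          (Finset.mem_range.mpr p.succ_pos) h1]
        simp
      have hcoeff : (u ^ p).coeff i = 0 := by
        have := congrArg (fun z => TruncatedWittVector.coeff ⟨i, Nat.lt_succ_self i⟩ z) hT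
        simp only [WittVector.coeff_truncate] at this
        rw [this, teich_pow, WittVector.teichmuller_coeff_pos _ _ _ hipos]
      have : u.coeff i ^ p = 0 := by
        rw [← WittVector.coeff_frobenius_charP, ← h, hcoeff]
      exact IsReduced.eq_zero _ ⟨p, this⟩
  ext n
  cases n with
  | zero => rw [WittVector.teichmuller_coeff_zero]
  | succ n =>
    rw [key (n + 1) (Nat.succ_ne_zero n),
      WittVector.teichmuller_coeff_pos _ _ _ (Nat.succ_pos n)]

end Statement6Aux

/-- Let `k` be a perfect field of characteristic `p`, `(k, N)` a log
point, and `R, R'` reduced `𝔽_p`-algebras equipped with log structures `M → R`,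
`M' → R'` making them log algebras over `(k, N)`.  Equip `W(R)` and `W(R')` with the
Teichmüller log structures.  Then restriction induces a bijection between
Frobenius-compatible morphisms of log `W(k)`-algebras `(W(R), M) → (W(R'), M')`
and morphisms of log `k`-algebras `(R, M) → (R', M')`; i.e. every morphism of log
`k`-algebras `(f, ψ)` lifts uniquely to a Frobenius-compatible `(g, ψ)`. -/
theorem statement6
    (p : ℕ) [Fact p.Prime]
    (k : Type) [Field k] [CharP k p] [PerfectRing k p]
    -- the log point `(k, N)`
    (N : Type) [CommMonoid N] (ν : N →* k)
    (R R' : Type) [CommRing R] [CommRing R'] [IsReduced R] [IsReduced R']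
    [CharP R p] [CharP R' p]
    -- `k`-algebra structures
    (σ : k →+* R) (σ' : k →+* R')
    -- the log structures over `N`
    (M M' : Type) [CommMonoid M] [CommMonoid M']
    (α : M →* R) (α' : M' →* R')
    (ιM : N →* M) (ιM' : N →* M')
    (hlog : ∀ n, α (ιM n) = σ (ν n)) (hlog' : ∀ n, α' (ιM' n) = σ' (ν n)) :
    ∀ (f : R →+* R') (ψ : M →* M'),
      f.comp σ = σ' →                              -- `f` is a `k`-algebra map
      (∀ n, ψ (ιM n) = ιM' n) →                    -- `ψ` is a map over `N`
      (∀ m, f (α m) = α' (ψ m)) →                  -- `(f, ψ)` respects the log structures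
      ∃! g : WittVector p R →+* WittVector p R',
        -- `g` is a `W(k)`-algebra map
        (∀ w : WittVector p k,
          g (WittVector.map σ w) = WittVector.map σ' w) ∧
        -- `g` is Frobenius compatible
        (∀ x, g (WittVector.frobenius x) = WittVector.frobenius (g x)) ∧
        -- `(g, ψ)` respects the Teichmüller log structures
        (∀ m, g (WittVector.teichmuller p (α m)) =
          WittVector.teichmuller p (α' (ψ m))) ∧
        -- `g` restricts to `f` modulo `V`
        (∀ x, WittVector.constantCoeff (g x) = f (WittVector.constantCoeff x)) := by
  intro f ψ hσ hψ hα
  refine ⟨WittVector.map f, ⟨?_, ?_, ?_, ?_⟩, ?_⟩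
  · -- W(k)-algebra map
    intro w
    ext n
    rw [WittVector.map_coeff, WittVector.map_coeff, WittVector.map_coeff,
      ← RingHom.comp_apply, hσ]
  · -- Frobenius compatibility
    intro x
    ext n
    rw [WittVector.map_coeff, WittVector.coeff_frobenius_charP,
      WittVector.coeff_frobenius_charP, WittVector.map_coeff, map_pow]
  · -- Teichmüller log structures
    intro m
    rw [WittVector.map_teichmuller, hα]
  · -- restricts to f
    intro x
    rw [WittVector.constantCoeff_apply, WittVector.constantCoeff_apply,
      WittVector.map_coeff]
  · -- uniqueness
    rintro g ⟨-, hg2, -, hg4⟩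
    -- g commutes with Verschiebung
    have gV : ∀ x, g (WittVector.verschiebung x) = WittVector.verschiebung (g x) := by
      intro x
      apply Statement6Aux.frob_inj (p := p) (B := R')
      rw [← hg2, WittVector.frobenius_verschiebung, WittVector.frobenius_verschiebung,
        map_mul, map_natCast]
    -- g sends Teichmüller lifts to Teichmüller lifts
    have gT : ∀ a : R, g (WittVector.teichmuller p a) = WittVector.teichmuller p (f a) := by
      intro a
      have hfrob : g (WittVector.teichmuller p a) ^ p =
          WittVector.frobenius (g (WittVector.teichmuller p a)) := by
        rw [← map_pow g, ← Statement6Aux.frob_teich a, hg2]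
      have h := Statement6Aux.eq_teich _ hfrob
      have h0 : (g (WittVector.teichmuller p a)).coeff 0 = f a := by
        have := hg4 (WittVector.teichmuller p a)
        rw [WittVector.constantCoeff_apply, WittVector.constantCoeff_apply,
          WittVector.teichmuller_coeff_zero] at this
        exact this
      rw [h, h0]
    -- the difference of g and map f vanishes coefficientwise
    have main : ∀ (n : ℕ) (x : WittVector p R),
        (g x - WittVector.map f x).coeff n = 0 := by
      intro n
      induction n with
      | zero =>
        intro x
        rw [Statement6Aux.teich_decomp (p := p) x]
        set c := x.coeff 0
        set t := WittVector.mk p fun j =>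
          (x - WittVector.teichmuller p c).coeff (j + 1)
        rw [map_add, map_add, gT, gV, WittVector.map_teichmuller,
          WittVector.map_verschiebung, add_sub_add_left_eq_sub,
          Statement6Aux.versch_sub]
        exact WittVector.verschiebung_coeff_zero _
      | succ n ih =>
        intro x
        rw [Statement6Aux.teich_decomp (p := p) x]
        set c := x.coeff 0
        set t := WittVector.mk p fun j =>
          (x - WittVector.teichmuller p c).coeff (j + 1)
        rw [map_add, map_add, gT, gV, WittVector.map_teichmuller,
          WittVector.map_verschiebung, add_sub_add_left_eq_sub,
          Statement6Aux.versch_sub, WittVector.verschiebung_coeff_succ]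
        exact ih t
    apply RingHom.ext
    intro x
    have : g x - WittVector.map f x = 0 :=
      WittVector.ext fun n => by rw [main n x, WittVector.zero_coeff]
    exact sub_eq_zero.mp this
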